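/- Let $n \ge 3$ and let $u$ be a continuous positive function on $\mathbb{R}^n$ such that for all $x \in \mathbb{R}^n$, all $\lambda > 0$, and all $y$ with $|y - x| \ge \lambda$, one has $u_{x,\lambda}(y) \le u(y)$, where $u_{x,\lambda}(y) := \frac{\lambda^{n-2}}{|y-x|^{n-2}} u\left(x + \frac{\lambda^2(y-x)}{|y-x|^2}\right)$ is the Kelvin transform of $u$ with respect to the ball $B_\lambda(x)$. Then $u$ is constant: $u \equiv u(0)$. -/

import Mathlib

open Filter MeasureTheory

noncomputable def grad {n : ℕ} (w : EuclideanSpace ℝ (Fin n) → ℝ)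
    (x : EuclideanSpace ℝ (Fin n)) : Fin n → ℝ :=
  fun i => fderiv ℝ w x (EuclideanSpace.single i 1)

noncomputable def hess {n : ℕ} (w : EuclideanSpace ℝ (Fin n) → ℝ)
    (x : EuclideanSpace ℝ (Fin n)) : Matrix (Fin n) (Fin n) ℝ :=
  Matrix.of fun i j =>
    fderiv ℝ (fun y => fderiv ℝ w y (EuclideanSpace.single i 1)) x (EuclideanSpace.single j 1)

noncomputable def gradSq {n : ℕ} (w : EuclideanSpace ℝ (Fin n) → ℝ)
    (x : EuclideanSpace ℝ (Fin n)) : ℝ :=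
  ∑ i, (grad w x i) ^ 2

noncomputable def Aw {n : ℕ} (w : EuclideanSpace ℝ (Fin n) → ℝ)
    (x : EuclideanSpace ℝ (Fin n)) : Matrix (Fin n) (Fin n) ℝ :=
  w x • hess w x - ((1 / 2) * gradSq w x) • (1 : Matrix (Fin n) (Fin n) ℝ)

noncomputable def Asch (n : ℕ) (u : EuclideanSpace ℝ (Fin n) → ℝ)
    (x : EuclideanSpace ℝ (Fin n)) : Matrix (Fin n) (Fin n) ℝ :=
  (-(2 / ((n : ℝ) - 2)) * (u x) ^ (-(((n : ℝ) + 2) / ((n : ℝ) - 2)))) • hess u x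
    + ((2 * (n : ℝ) / ((n : ℝ) - 2) ^ 2) * (u x) ^ (-(2 * (n : ℝ) / ((n : ℝ) - 2)))) •
        Matrix.of (fun i j => grad u x i * grad u x j)
    - ((2 / ((n : ℝ) - 2) ^ 2) * (u x) ^ (-(2 * (n : ℝ) / ((n : ℝ) - 2))) * gradSq u x) •
        (1 : Matrix (Fin n) (Fin n) ℝ)

noncomputable def kelvin {n : ℕ} (u : EuclideanSpace ℝ (Fin n) → ℝ)
    (x : EuclideanSpace ℝ (Fin n)) (l : ℝ) (y : EuclideanSpace ℝ (Fin n)) : ℝ :=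
  (l ^ (n - 2) / ‖y - x‖ ^ (n - 2)) * u (x + (l ^ 2 / ‖y - x‖ ^ 2) • (y - x))

theorem stmt11 {n : ℕ} (hn : 3 ≤ n) (u : EuclideanSpace ℝ (Fin n) → ℝ)
    (hu : Continuous u) (hupos : ∀ x, 0 < u x)
    (hms : ∀ (x : EuclideanSpace ℝ (Fin n)) (l : ℝ), 0 < l →
      ∀ y : EuclideanSpace ℝ (Fin n), l ≤ ‖y - x‖ → kelvin u x l y ≤ u y) :
    ∀ z : EuclideanSpace ℝ (Fin n), u z = u 0 := by
  have key : ∀ z y : EuclideanSpace ℝ (Fin n), u z ≤ u y := by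
    intro z y
    rcases eq_or_ne z y with rfl | hzy
    · exact le_refl _
    set d := ‖z - y‖ with hd
    have hd0 : 0 < d := by
      rw [hd]; exact norm_pos_iff.mpr (sub_ne_zero.mpr hzy)
    set e : EuclideanSpace ℝ (Fin n) := d⁻¹ • (z - y) with he_def
    have he : ‖e‖ = 1 := by
      rw [he_def, norm_smul, Real.norm_eq_abs, abs_of_pos (inv_pos.mpr hd0), ← hd]
      field_simp
    have hde : d • e = z - y := by
      rw [he_def, smul_smul, mul_inv_cancel₀ hd0.ne', one_smul]
    have main : ∀ t : ℝ, 0 < t → (Real.sqrt (t / (t + d)))^(n-2) * u z ≤ u y := by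
      intro t ht
      have htd : 0 < t + d := by linarith
      set x := z + t • e with hx
      have hyx : y - x = (-(t + d)) • e := by
        have : y - x = -(d • e) - t • e := by rw [hde, hx]; abel
        rw [this]; module
      have hnyx : ‖y - x‖ = t + d := by
        rw [hyx, norm_smul, he, Real.norm_eq_abs, abs_neg, abs_of_pos htd, mul_one]
      set l := Real.sqrt (t * (t + d)) with hl
      have hl0 : 0 < l := Real.sqrt_pos.mpr (by positivity)
      have hll : l ≤ ‖y - x‖ := by
        rw [hnyx]
        calc l ≤ Real.sqrt ((t+d)^2) := Real.sqrt_le_sqrt (by nlinarith)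
          _ = t + d := Real.sqrt_sq htd.le
      have h1 := hms x l hl0 y hll
      have hl2 : l^2 = t*(t+d) := Real.sq_sqrt (by positivity)
      have harg : x + (l^2 / ‖y-x‖^2) • (y - x) = z := by
        rw [hnyx, hl2, hyx, smul_smul,
          show t*(t+d)/(t+d)^2 * (-(t+d)) = -t by field_simp, hx]
        module
      rw [kelvin, harg, hnyx] at h1
      have hfrac : l^(n-2)/(t+d)^(n-2) = (Real.sqrt (t/(t+d)))^(n-2) := by
        rw [← div_pow]
        congr 1
        rw [hl, show t/(t+d) = t*(t+d)/(t+d)^2 by field_simp,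
          Real.sqrt_div' _ (by positivity), Real.sqrt_sq htd.le]
      rw [hfrac] at h1
      exact h1
    have hadd : Tendsto (fun t : ℝ => t + d) atTop atTop :=
      tendsto_atTop_add_const_right _ _ tendsto_id
    have h0 : Tendsto (fun t : ℝ => d / (t + d)) atTop (nhds 0) :=
      tendsto_const_nhds.div_atTop hadd
    have h1 : Tendsto (fun t : ℝ => t / (t + d)) atTop (nhds 1) := by
      have h1' : Tendsto (fun t : ℝ => 1 - d/(t+d)) atTop (nhds 1) := by
        simpa using tendsto_const_nhds.sub h0
      refine h1'.congr' ?_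
      filter_upwards [eventually_gt_atTop 0] with t ht
      have : t + d ≠ 0 := by positivity
      field_simp
      ring
    have hlim : Tendsto (fun t : ℝ => (Real.sqrt (t / (t + d)))^(n-2) * u z)
        atTop (nhds (u z)) := by
      have h2 : Tendsto (fun t : ℝ => Real.sqrt (t/(t+d))) atTop (nhds 1) := by
        have := (Real.continuous_sqrt.tendsto 1).comp h1
        simpa [Function.comp_def] using this
      have h3 := (h2.pow (n-2)).mul_const (u z)
      simpa using h3
    exact le_of_tendsto hlim (eventually_atTop.mpr ⟨1, fun t ht => main t (by linarith)⟩)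
  intro z
  exact le_antisymm (key z 0) (key 0 z)
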